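/- Let μ be the Bernoulli measure on Σ = ℕ^ℤ generated by weights (p_j) with Σ p_j = 1 and Σ p_j log² p_j < ∞. Then the limit σ² = lim_{n→∞} (K_2(A^n) − H(A^n)²)/n exists and equals (1/2) Σ_{i,j} p_i p_j log²(p_i/p_j), where A is the canonical one-coordinate partition. -/
import Mathlib


open MeasureTheory

/-- Cylinder set in `ℕ^ℤ` fixing coordinates `0, …, n−1` to the word `a`;
these are exactly the atoms of the join `A^n` for the shift and the
zero-coordinate partition `A`. -/
def cyl (n : ℕ) (a : Fin n → ℕ) : Set (ℤ → ℕ) :=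
  {x | ∀ j : Fin n, x (j : ℤ) = a j}

/-- `H(A^n)` for the Bernoulli measure. -/
noncomputable def Hn (μ : Measure (ℤ → ℕ)) (n : ℕ) : ℝ :=
  ∑' a : Fin n → ℕ, -((μ (cyl n a)).toReal * Real.log (μ (cyl n a)).toReal)

/-- `K_2(A^n)` for the Bernoulli measure. -/
noncomputable def K2n (μ : Measure (ℤ → ℕ)) (n : ℕ) : ℝ :=
  ∑' a : Fin n → ℕ, (μ (cyl n a)).toReal * (Real.log (μ (cyl n a)).toReal) ^ 2

section Aux

variable {α β : Type*}

private lemma aux_summable_mul {f : α → ℝ} {g : β → ℝ} (hf : Summable f) (hg : Summable g) :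
    Summable fun x : α × β => f x.1 * g x.2 :=
  summable_mul_of_summable_norm (by simpa using hf.abs) (by simpa using hg.abs)

private lemma aux_tsum_mul {f : α → ℝ} {g : β → ℝ} (hf : Summable f) (hg : Summable g) :
    ∑' x : α × β, f x.1 * g x.2 = (∑' a, f a) * ∑' b, g b :=
  (tsum_mul_tsum_of_summable_norm (by simpa using hf.abs) (by simpa using hg.abs)).symm

/-- The key induction: sums of the product weights against `1`, `log`, `log²`. -/
private lemma bernoulli_key (p : ℕ → ℝ) (hp : ∀ j, 0 < p j) (hps : Summable p)
    (hsum : ∑' j, p j = 1)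
    (h1 : Summable fun j => p j * Real.log (p j))
    (h2 : Summable fun j => p j * (Real.log (p j)) ^ 2) :
    ∀ n : ℕ,
      (Summable fun a : Fin n → ℕ => ∏ j, p (a j)) ∧
      (Summable fun a : Fin n → ℕ => (∏ j, p (a j)) * Real.log (∏ j, p (a j))) ∧
      (Summable fun a : Fin n → ℕ => (∏ j, p (a j)) * (Real.log (∏ j, p (a j))) ^ 2) ∧
      (∑' a : Fin n → ℕ, ∏ j, p (a j)) = 1 ∧
      (∑' a : Fin n → ℕ, (∏ j, p (a j)) * Real.log (∏ j, p (a j)))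
        = n * ∑' j, p j * Real.log (p j) ∧
      (∑' a : Fin n → ℕ, (∏ j, p (a j)) * (Real.log (∏ j, p (a j))) ^ 2)
        = n * (∑' j, p j * (Real.log (p j)) ^ 2)
          + (n : ℝ) * ((n : ℝ) - 1) * (∑' j, p j * Real.log (p j)) ^ 2 := by
  intro n
  induction n with
  | zero =>
      have h0 : ∀ a : Fin 0 → ℕ, (∏ j, p (a j)) = 1 := fun a => by simp
      have hu : ∀ (f : (Fin 0 → ℕ) → ℝ), (∑' a : Fin 0 → ℕ, f a) = f default := fun f =>
        tsum_eq_single default (fun b hb => absurd (Subsingleton.elim b default) hb)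
      refine ⟨?_, ?_, ?_, ?_, ?_, ?_⟩
      · exact (hasSum_single (f := fun a : Fin 0 → ℕ => ∏ j, p (a j)) default
          (fun b hb => absurd (Subsingleton.elim b default) hb)).summable
      · exact (hasSum_single (f := fun a : Fin 0 → ℕ =>
          (∏ j, p (a j)) * Real.log (∏ j, p (a j))) default
          (fun b hb => absurd (Subsingleton.elim b default) hb)).summable
      · exact (hasSum_single (f := fun a : Fin 0 → ℕ =>
          (∏ j, p (a j)) * (Real.log (∏ j, p (a j))) ^ 2) default
          (fun b hb => absurd (Subsingleton.elim b default) hb)).summable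
      · rw [hu]; simp [h0]
      · rw [hu]; simp [h0]
      · rw [hu]; simp [h0]
  | succ n ih =>
      obtain ⟨S0, S1, S2, T0, T1, T2⟩ := ih
      set q : (Fin n → ℕ) → ℝ := fun a => ∏ j, p (a j) with hq
      have hqpos : ∀ a, 0 < q a := fun a => Finset.prod_pos (fun j _ => hp (a j))
      set s1 : ℝ := ∑' j, p j * Real.log (p j)
      set s2 : ℝ := ∑' j, p j * (Real.log (p j)) ^ 2
      -- the equivalence
      set e : (ℕ × (Fin n → ℕ)) ≃ (Fin (n + 1) → ℕ) := Fin.consEquiv (fun _ => ℕ) with he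
      have hprod : ∀ x : ℕ × (Fin n → ℕ),
          (∏ j : Fin (n + 1), p (e x j)) = p x.1 * q x.2 := by
        intro x
        have : e x = Fin.cons x.1 x.2 := rfl
        rw [this, Fin.prod_univ_succ]
        simp [hq]
      have hlog : ∀ x : ℕ × (Fin n → ℕ),
          Real.log (p x.1 * q x.2) = Real.log (p x.1) + Real.log (q x.2) := fun x =>
        Real.log_mul (hp x.1).ne' (hqpos x.2).ne'
      -- summability of the three pieces over the product type
      have hs00 := aux_summable_mul hps S0
      have hs10 := aux_summable_mul h1 S0
      have hs01 := aux_summable_mul hps S1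
      have hs20 := aux_summable_mul h2 S0
      have hs11 := aux_summable_mul h1 S1
      have hs02 := aux_summable_mul hps S2
      -- pointwise identities
      have key0 : ∀ x : ℕ × (Fin n → ℕ),
          (∏ j : Fin (n+1), p (e x j)) = p x.1 * q x.2 := hprod
      have key1 : ∀ x : ℕ × (Fin n → ℕ),
          (∏ j : Fin (n+1), p (e x j)) * Real.log (∏ j : Fin (n+1), p (e x j))
            = (p x.1 * Real.log (p x.1)) * q x.2 + p x.1 * (q x.2 * Real.log (q x.2)) := by
        intro x; rw [hprod x, hlog x]; ring
      have key2 : ∀ x : ℕ × (Fin n → ℕ),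
          (∏ j : Fin (n+1), p (e x j)) * (Real.log (∏ j : Fin (n+1), p (e x j))) ^ 2
            = (p x.1 * (Real.log (p x.1)) ^ 2) * q x.2
              + 2 * ((p x.1 * Real.log (p x.1)) * (q x.2 * Real.log (q x.2)))
              + p x.1 * (q x.2 * (Real.log (q x.2)) ^ 2) := by
        intro x; rw [hprod x, hlog x]; ring
      -- summability over Fin (n+1) → ℕ
      have Sm0 : Summable fun a : Fin (n+1) → ℕ => ∏ j, p (a j) := by
        rw [← e.summable_iff]
        exact hs00.congr fun x => (key0 x).symm
      have Sm1 : Summable fun a : Fin (n+1) → ℕ =>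
          (∏ j, p (a j)) * Real.log (∏ j, p (a j)) := by
        rw [← e.summable_iff]
        exact (hs10.add hs01).congr fun x => (key1 x).symm
      have Sm2 : Summable fun a : Fin (n+1) → ℕ =>
          (∏ j, p (a j)) * (Real.log (∏ j, p (a j))) ^ 2 := by
        rw [← e.summable_iff]
        exact ((hs20.add ((hs11.mul_left 2))).add hs02).congr fun x => (key2 x).symm
      -- sums
      have Tm0 : (∑' a : Fin (n+1) → ℕ, ∏ j, p (a j)) = 1 := by
        calc (∑' a : Fin (n+1) → ℕ, ∏ j, p (a j))
            = ∑' x : ℕ × (Fin n → ℕ), ∏ j : Fin (n+1), p (e x j) := (e.tsum_eq _).symm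
          _ = ∑' x : ℕ × (Fin n → ℕ), p x.1 * q x.2 := tsum_congr key0
          _ = 1 := by rw [aux_tsum_mul hps S0, hsum, T0, one_mul]
      have Tm1 : (∑' a : Fin (n+1) → ℕ, (∏ j, p (a j)) * Real.log (∏ j, p (a j)))
          = (n + 1 : ℕ) * s1 := by
        calc (∑' a : Fin (n+1) → ℕ, (∏ j, p (a j)) * Real.log (∏ j, p (a j)))
            = ∑' x : ℕ × (Fin n → ℕ),
                (∏ j : Fin (n+1), p (e x j)) * Real.log (∏ j : Fin (n+1), p (e x j)) :=
              (e.tsum_eq _).symm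
          _ = ∑' x : ℕ × (Fin n → ℕ),
                ((p x.1 * Real.log (p x.1)) * q x.2 + p x.1 * (q x.2 * Real.log (q x.2))) :=
              tsum_congr key1
          _ = (n + 1 : ℕ) * s1 := by
              rw [Summable.tsum_add hs10 hs01, aux_tsum_mul h1 S0, aux_tsum_mul hps S1, hsum, T0, T1]
              push_cast; ring
      have Tm2 : (∑' a : Fin (n+1) → ℕ, (∏ j, p (a j)) * (Real.log (∏ j, p (a j))) ^ 2)
          = (n + 1 : ℕ) * s2 + ((n + 1 : ℕ) : ℝ) * (((n + 1 : ℕ) : ℝ) - 1) * s1 ^ 2 := by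
        calc (∑' a : Fin (n+1) → ℕ, (∏ j, p (a j)) * (Real.log (∏ j, p (a j))) ^ 2)
            = ∑' x : ℕ × (Fin n → ℕ),
                (∏ j : Fin (n+1), p (e x j)) * (Real.log (∏ j : Fin (n+1), p (e x j))) ^ 2 :=
              (e.tsum_eq _).symm
          _ = ∑' x : ℕ × (Fin n → ℕ),
                ((p x.1 * (Real.log (p x.1)) ^ 2) * q x.2
                  + 2 * ((p x.1 * Real.log (p x.1)) * (q x.2 * Real.log (q x.2)))
                  + p x.1 * (q x.2 * (Real.log (q x.2)) ^ 2)) := tsum_congr key2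
          _ = (n + 1 : ℕ) * s2 + ((n + 1 : ℕ) : ℝ) * (((n + 1 : ℕ) : ℝ) - 1) * s1 ^ 2 := by
              rw [Summable.tsum_add (hs20.add (hs11.mul_left 2)) hs02,
                Summable.tsum_add hs20 (hs11.mul_left 2), tsum_mul_left,
                aux_tsum_mul h2 S0, aux_tsum_mul h1 S1, aux_tsum_mul hps S2, hsum, T0, T1, T2]
              push_cast; ring
      exact ⟨Sm0, Sm1, Sm2, Tm0, Tm1, Tm2⟩

end Aux

/-- For the Bernoulli measure with weights `p`, the limit
`σ² = lim (K_2(A^n) − H(A^n)²)/n` exists and equals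
`(1/2) Σ_{i,j} p_i p_j log²(p_i/p_j)`. -/
theorem bernoulli_variance (p : ℕ → ℝ) (hp : ∀ j, 0 < p j)
    (hsum : ∑' j, p j = 1)
    (hlog2 : Summable fun j => p j * (Real.log (p j)) ^ 2)
    (μ : Measure (ℤ → ℕ)) [IsProbabilityMeasure μ]
    (hcyl : ∀ (n : ℕ) (a : Fin n → ℕ),
      μ (cyl n a) = ENNReal.ofReal (∏ j : Fin n, p (a j))) :
    Filter.Tendsto (fun n : ℕ => (K2n μ n - (Hn μ n) ^ 2) / n) Filter.atTop
      (nhds ((1 / 2) * ∑' q : ℕ × ℕ,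
        p q.1 * p q.2 * (Real.log (p q.1 / p q.2)) ^ 2)) := by
  -- summability of p
  have hps : Summable p := by
    by_contra h
    rw [tsum_eq_zero_of_not_summable h] at hsum
    exact one_ne_zero hsum.symm
  -- summability of p * log p
  have h1 : Summable fun j => p j * Real.log (p j) := by
    rw [← summable_abs_iff]
    refine Summable.of_nonneg_of_le (fun j => abs_nonneg _)
      (fun j => ?_) (hps.add hlog2)
    have hb : |Real.log (p j)| ≤ 1 + (Real.log (p j)) ^ 2 := by
      nlinarith [sq_abs (Real.log (p j)), abs_nonneg (Real.log (p j))]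
    calc |p j * Real.log (p j)| = p j * |Real.log (p j)| := by
          rw [abs_mul, abs_of_pos (hp j)]
      _ ≤ p j * (1 + (Real.log (p j)) ^ 2) := by
          exact mul_le_mul_of_nonneg_left hb (hp j).le
      _ = p j + p j * (Real.log (p j)) ^ 2 := by ring
  set s1 : ℝ := ∑' j, p j * Real.log (p j) with hs1
  set s2 : ℝ := ∑' j, p j * (Real.log (p j)) ^ 2 with hs2
  have key := bernoulli_key p hp hps hsum h1 hlog2
  -- identify the target sum
  have htarget : (1 / 2) * (∑' q : ℕ × ℕ, p q.1 * p q.2 * (Real.log (p q.1 / p q.2)) ^ 2)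
      = s2 - s1 ^ 2 := by
    have hpt : ∀ q : ℕ × ℕ, p q.1 * p q.2 * (Real.log (p q.1 / p q.2)) ^ 2
        = (p q.1 * (Real.log (p q.1)) ^ 2) * p q.2
          + p q.1 * (p q.2 * (Real.log (p q.2)) ^ 2)
          - 2 * ((p q.1 * Real.log (p q.1)) * (p q.2 * Real.log (p q.2))) := by
      intro q
      rw [Real.log_div (hp q.1).ne' (hp q.2).ne']
      ring
    rw [tsum_congr hpt, Summable.tsum_sub ((aux_summable_mul hlog2 hps).add
        (aux_summable_mul hps hlog2)) ((aux_summable_mul h1 h1).mul_left 2),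
      Summable.tsum_add (aux_summable_mul hlog2 hps) (aux_summable_mul hps hlog2),
      tsum_mul_left, aux_tsum_mul hlog2 hps, aux_tsum_mul hps hlog2,
      aux_tsum_mul h1 h1, hsum]
    simp only [← hs1, ← hs2]
    ring
  rw [htarget]
  -- identify Hn and K2n
  have hto : ∀ (n : ℕ) (a : Fin n → ℕ),
      (μ (cyl n a)).toReal = ∏ j, p (a j) := by
    intro n a
    rw [hcyl n a, ENNReal.toReal_ofReal (Finset.prod_nonneg fun j _ => (hp (a j)).le)]
  have hH : ∀ n : ℕ, Hn μ n = -(n * s1) := by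
    intro n
    unfold Hn
    rw [tsum_congr (fun a : Fin n → ℕ => by rw [hto n a]), tsum_neg, (key n).2.2.2.2.1]
  have hK : ∀ n : ℕ, K2n μ n = n * s2 + (n : ℝ) * ((n : ℝ) - 1) * s1 ^ 2 := by
    intro n
    unfold K2n
    rw [tsum_congr (fun a : Fin n → ℕ => by rw [hto n a]), (key n).2.2.2.2.2]
  -- the sequence is eventually constant
  have hev : ∀ᶠ n : ℕ in Filter.atTop,
      (K2n μ n - (Hn μ n) ^ 2) / n = s2 - s1 ^ 2 := by
    filter_upwards [Filter.eventually_ge_atTop 1] with n hn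
    have hn0 : (n : ℝ) ≠ 0 := Nat.cast_ne_zero.mpr (by omega)
    rw [hK n, hH n]
    field_simp
    ring
  exact Filter.Tendsto.congr' (Filter.EventuallyEq.symm hev) tendsto_const_nhds
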